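/- Extension lemma: Let s be a partial outmap, and u, v distinct known vertices that do not clash, and i a dimension with (s(u) XOR s(v)) AND (u XOR v) ≠ e_i. Then u XOR e_i ≠ v, and if s is extended by setting s(u XOR e_i) = s(u) XOR e_i, the vertices u XOR e_i and v do not clash. -/
import Mathlib


/-- Flip coordinate `i` of a vertex/bitstring. -/
def flipV {n : ℕ} (u : Fin n → Bool) (i : Fin n) : Fin n → Bool :=
  fun j => if j = i then !u j else u j

/-- Extension lemma: if known vertices `u, v` with outmap values `a, b` do not
clash and `(a ⊕ b) ∧ (u ⊕ v) ≠ e_i`, then `u ⊕ e_i ≠ v`, and extending the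
partial outmap by `s(u ⊕ e_i) = a ⊕ e_i` creates no clash between `u ⊕ e_i`
and `v`. -/
theorem stmt18 (n : ℕ) (u v a b : Fin n → Bool) (i : Fin n)
    (hnoclash : ∃ j, u j ≠ v j ∧ a j ≠ b j)
    (hnei : ¬ ∀ j, ((u j ≠ v j ∧ a j ≠ b j) ↔ j = i)) :
    flipV u i ≠ v ∧ ∃ j, flipV u i j ≠ v j ∧ flipV a i j ≠ b j := by
  have hex : ∃ j, j ≠ i ∧ u j ≠ v j ∧ a j ≠ b j := by
    by_contra hno
    push_neg at hno
    apply hnei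
    intro j
    constructor
    · intro h
      by_contra hji
      exact h.2 (hno j hji h.1)
    · intro h
      obtain ⟨k, hk⟩ := hnoclash
      by_cases hki : k = i
      · rw [h, ← hki]; exact hk
      · exact absurd (hno k hki hk.1) hk.2
  obtain ⟨j, hji, huv, hab⟩ := hex
  have h1 : flipV u i j = u j := by simp [flipV, hji]
  have h2 : flipV a i j = a j := by simp [flipV, hji]
  refine ⟨fun h => huv (h1 ▸ congrFun h j), ⟨j, h1 ▸ huv, h2 ▸ hab⟩⟩
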